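/- Let θ be C², convex, even, with |θ'| ≤ 1 and θ'' ≥ 0, and M(x,y) = (x+y+θ(x−y))/2. If φ, ψ : I → ℝ are C² functions on an interval I with φ''(t) > 0 and ψ''(t) > 0 for all t, then the function t ↦ M(φ(t), ψ(t)) has strictly positive second derivative on I. -/

import Mathlib

/-- If θ is C², convex, even, with |θ'| ≤ 1 and θ'' ≥ 0, and
`M(x,y) = (x+y+θ(x-y))/2`, then for C² functions φ, ψ with strictly positive
second derivative on an open interval-like set `I`, the function
`t ↦ M (φ t) (ψ t)` has strictly positive second derivative on `I`. -/
theorem smooth_max_strongly_convex_comp (θ : ℝ → ℝ)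
    (hθ : ContDiff ℝ 2 θ)
    (hconv : ConvexOn ℝ Set.univ θ)
    (heven : ∀ t, θ (-t) = θ t)
    (hθ' : ∀ t, |deriv θ t| ≤ 1)
    (hθ'' : ∀ t, 0 ≤ iteratedDeriv 2 θ t)
    (I : Set ℝ) (hI : IsOpen I)
    (φ ψ : ℝ → ℝ) (hφ : ContDiff ℝ 2 φ) (hψ : ContDiff ℝ 2 ψ)
    (hφ'' : ∀ t ∈ I, 0 < iteratedDeriv 2 φ t)
    (hψ'' : ∀ t ∈ I, 0 < iteratedDeriv 2 ψ t) :
    ∀ t ∈ I, 0 < iteratedDeriv 2 (fun s => (φ s + ψ s + θ (φ s - ψ s)) / 2) t := by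
  intro t ht
  have h21 : (2 : WithTop ℕ∞) = 1 + 1 := by norm_num
  have hφd : Differentiable ℝ φ := hφ.differentiable (by norm_num)
  have hψd : Differentiable ℝ ψ := hψ.differentiable (by norm_num)
  have hθd : Differentiable ℝ θ := hθ.differentiable (by norm_num)
  have hφ1d : Differentiable ℝ (deriv φ) :=
    ((contDiff_succ_iff_deriv.mp (h21 ▸ hφ)).2.2).differentiable (by norm_num)
  have hψ1d : Differentiable ℝ (deriv ψ) :=
    ((contDiff_succ_iff_deriv.mp (h21 ▸ hψ)).2.2).differentiable (by norm_num)
  have hθ1d : Differentiable ℝ (deriv θ) :=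
    ((contDiff_succ_iff_deriv.mp (h21 ▸ hθ)).2.2).differentiable (by norm_num)
  have hit : ∀ f : ℝ → ℝ, iteratedDeriv 2 f = deriv (deriv f) := by
    intro f
    rw [show (2 : ℕ) = 1 + 1 from rfl, iteratedDeriv_succ, iteratedDeriv_one]
  -- first derivative
  have hD : deriv (fun s => (φ s + ψ s + θ (φ s - ψ s)) / 2)
      = fun s => (deriv φ s + deriv ψ s + deriv θ (φ s - ψ s) * (deriv φ s - deriv ψ s)) / 2 := by
    funext s
    have h1 : HasDerivAt φ (deriv φ s) s := (hφd s).hasDerivAt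
    have h2 : HasDerivAt ψ (deriv ψ s) s := (hψd s).hasDerivAt
    have h3 : HasDerivAt θ (deriv θ (φ s - ψ s)) (φ s - ψ s) := (hθd _).hasDerivAt
    have h4 : HasDerivAt (fun x => (φ x + ψ x + θ (φ x - ψ x)) / 2)
        ((deriv φ s + deriv ψ s + deriv θ (φ s - ψ s) * (deriv φ s - deriv ψ s)) / 2) s :=
      ((h1.add h2).add (h3.comp s (h1.sub h2))).div_const 2
    exact h4.deriv
  rw [hit, hD]
  set u := φ t - ψ t with hu
  set a := deriv θ u with ha
  set A := deriv (deriv φ) t with hA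
  set B := deriv (deriv ψ) t with hB
  set c := deriv (deriv θ) u with hc
  set d := deriv φ t - deriv ψ t with hd
  have h1 : HasDerivAt (deriv φ) A t := (hφ1d t).hasDerivAt
  have h2 : HasDerivAt (deriv ψ) B t := (hψ1d t).hasDerivAt
  have huu : HasDerivAt (fun s => φ s - ψ s) d t := (hφd t).hasDerivAt.sub (hψd t).hasDerivAt
  have h3 : HasDerivAt (fun s => deriv θ (φ s - ψ s)) (c * d) t :=
    by have := (hθ1d u).hasDerivAt.comp t huu; exact this
  have h4 : HasDerivAt (fun s => deriv θ (φ s - ψ s) * (deriv φ s - deriv ψ s))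
      (c * d * d + a * (A - B)) t := h3.mul (h1.sub h2)
  have htot : HasDerivAt
      (fun s => (deriv φ s + deriv ψ s + deriv θ (φ s - ψ s) * (deriv φ s - deriv ψ s)) / 2)
      ((A + B + (c * d * d + a * (A - B))) / 2) t :=
    ((h1.add h2).add h4).div_const 2
  rw [htot.deriv]
  clear_value u a A B c d
  have hA' : 0 < A := by rw [hA, ← hit]; exact hφ'' t ht
  have hB' : 0 < B := by rw [hB, ← hit]; exact hψ'' t ht
  have hc' : 0 ≤ c := by rw [hc, ← hit]; exact hθ'' u
  obtain ⟨haL, haU⟩ := abs_le.mp (hθ' u)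
  have hcd : 0 ≤ c * d * d := by nlinarith [mul_self_nonneg d]
  rcases le_total 0 (A - B) with h | h
  · have h5 := mul_le_mul_of_nonneg_right haL h
    rw [← ha] at h5
    linarith
  · have h5 := mul_le_mul_of_nonpos_right haU h
    rw [← ha] at h5
    linarith
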